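/- Let X₁, X₂ ∈ A⁺. Then either (a) ρ(X₁X₂) = ρ(X₁)ρ(X₂), or (b) there exist Z₁, Z₄ ∈ A* and Z₂, Z₃ ∈ A⁺ with X₁ = Z₁Z₂, X₂ = Z₃Z₄ and Z₂Z₃ = W₀, such that ρ(X₁X₂) = ρ(Z₁)sρ(Z₄). -/

import Mathlib

/-- A rewriting system: every rule has nonempty left- and right-hand sides. -/
def IsRWS {α : Type*} (R : Set (List α × List α)) : Prop :=
  ∀ r ∈ R, r.1 ≠ [] ∧ r.2 ≠ []

/-- One-step reduction `W₁ →_R W₂`. -/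
def Step {α : Type*} (R : Set (List α × List α)) (W₁ W₂ : List α) : Prop :=
  ∃ Z₁ Z₂ X Y, (X, Y) ∈ R ∧ W₁ = Z₁ ++ X ++ Z₂ ∧ W₂ = Z₁ ++ Y ++ Z₂

/-- `→*_R`: the reflexive-transitive closure of one-step reduction. -/
def Steps {α : Type*} (R : Set (List α × List α)) : List α → List α → Prop :=
  Relation.ReflTransGen (Step R)

/-- Noetherian: no infinite reduction sequence. -/
def Noetherian {α : Type*} (R : Set (List α × List α)) : Prop :=
  ¬ ∃ g : ℕ → List α, ∀ i, Step R (g i) (g (i + 1))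

/-- Confluence. -/
def Confluent {α : Type*} (R : Set (List α × List α)) : Prop :=
  ∀ U V W, Steps R U V → Steps R U W → ∃ X, Steps R V X ∧ Steps R W X

/-- Complete rewriting system: Noetherian and confluent. -/
def CompleteRWS {α : Type*} (R : Set (List α × List α)) : Prop :=
  Noetherian R ∧ Confluent R

/-- `Irr R W`: `W ∈ A⁺` has no factor which is the left-hand side of a rule. -/
def Irr {α : Type*} (R : Set (List α × List α)) (W : List α) : Prop :=
  W ≠ [] ∧ ¬ ∃ Z₁ X Z₂, (∃ Y, (X, Y) ∈ R) ∧ W = Z₁ ++ X ++ Z₂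

/-- `Presents R f`: the map sending a nonempty word `u` over `α` to `f u` exhibits the
semigroup `S` as the semigroup presented by `[α; R]`, i.e. the semigroup `A⁺/↔*_R`:
`f` restricted to nonempty words is a surjective semigroup homomorphism whose kernel
is the congruence `↔*_R` generated by `R` (the value of `f` on the empty word is irrelevant). -/
def Presents {α S : Type*} [Semigroup S] (R : Set (List α × List α)) (f : List α → S) : Prop :=
  (∀ u v : List α, u ≠ [] → v ≠ [] → f (u ++ v) = f u * f v) ∧
  (∀ x : S, ∃ u : List α, u ≠ [] ∧ f u = x) ∧
  (∀ u v : List α, u ≠ [] → v ≠ [] → (f u = f v ↔ Relation.EqvGen (Step R) u v))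

/-- `S` has a finite complete rewriting system. -/
def HasFCRS (S : Type*) [Semigroup S] : Prop :=
  ∃ (α : Type) (R : Set (List α × List α)) (f : List α → S),
    Finite α ∧ R.Finite ∧ IsRWS R ∧ CompleteRWS R ∧ Presents R f

/-! ### The construction of Section 3: adjoining a letter `s` with `φ(s) = W₀`.
The alphabet `B = A ∪ {s}` is modelled as `α ⊕ Unit`, with `Sum.inl a` the letter
`a ∈ A` and `Sum.inr ()` the new letter `s`. -/

/-- The homomorphism `φ : B* → A*` with `φ(a) = a` for `a ∈ A` and `φ(s) = W₀`. -/
def phiS {α : Type*} (W₀ : List α) (l : List (α ⊕ Unit)) : List α :=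
  l.flatMap (Sum.elim (fun a => [a]) (fun _ => W₀))

open scoped Classical in
/-- The function `ρ : A* → B*`: `ρ(ε) = ε`; if `W = X₁W₀` ends with `W₀` then
`ρ(W) = ρ(X₁)s`; otherwise `W = X₂a` with `a ∈ A` and `ρ(W) = ρ(X₂)a`. -/
noncomputable def rhoS {α : Type*} (W₀ : List α) (W : List α) : List (α ⊕ Unit) :=
  if hW : W = [] then []
  else if h : W₀ ≠ [] ∧ W₀ <:+ W then
    rhoS W₀ (W.take (W.length - W₀.length)) ++ [Sum.inr ()]
  else
    rhoS W₀ W.dropLast ++ [Sum.inl (W.getLast hW)]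
termination_by W.length
decreasing_by
  · have h1 : W₀.length ≤ W.length := h.2.length_le
    have h2 : 0 < W₀.length := List.length_pos_iff.mpr h.1
    simp only [List.length_take]
    omega
  · have h3 : 0 < W.length := List.length_pos_iff.mpr hW
    simp only [List.length_dropLast]
    omega

lemma rho_nil {α : Type*} (W₀ : List α) : rhoS W₀ [] = [] := by
  rw [rhoS]; simp

lemma rho_snoc_W0 {α : Type*} (W₀ U : List α) (h : W₀ ≠ []) :
    rhoS W₀ (U ++ W₀) = rhoS W₀ U ++ [Sum.inr ()] := by
  rw [rhoS]
  rw [dif_neg (by simp [h]), dif_pos ⟨h, ⟨U, rfl⟩⟩]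
  congr 2
  simp [List.length_append, List.take_left]

lemma rho_snoc_a {α : Type*} (W₀ U : List α) (a : α) (h : ¬ (W₀ ≠ [] ∧ W₀ <:+ U ++ [a])) :
    rhoS W₀ (U ++ [a]) = rhoS W₀ U ++ [Sum.inl a] := by
  rw [rhoS]
  rw [dif_neg (by simp), dif_neg h]
  simp [List.getLast_append]

lemma lemma32_aux {α : Type*} (W₀ : List α) (hW₀ne : W₀ ≠ []) (X₁ : List α) :
    ∀ n (X₂ : List α), X₂.length = n → X₂ ≠ [] →
      (rhoS W₀ (X₁ ++ X₂) = rhoS W₀ X₁ ++ rhoS W₀ X₂ ∨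
      ∃ Z₁ Z₂ Z₃ Z₄ : List α, Z₂ ≠ [] ∧ Z₃ ≠ [] ∧
        X₁ = Z₁ ++ Z₂ ∧ X₂ = Z₃ ++ Z₄ ∧ Z₂ ++ Z₃ = W₀ ∧
        rhoS W₀ (X₁ ++ X₂) = rhoS W₀ Z₁ ++ [Sum.inr ()] ++ rhoS W₀ Z₄) := by
  intro n
  induction n using Nat.strong_induction_on with
  | _ n IH =>
    intro X₂ hlen hne
    by_cases hsuf : W₀ <:+ X₁ ++ X₂
    · obtain ⟨T, hT⟩ := hsuf
      have hlens : T.length + W₀.length = X₁.length + X₂.length := by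
        have := congrArg List.length hT
        simpa [List.length_append] using this
      by_cases hle : W₀.length ≤ X₂.length
      · -- W₀ is a suffix of X₂
        have hX1T : X₁.length ≤ T.length := by omega
        have hsuf2 : W₀ <:+ X₂ := by
          refine ⟨T.drop X₁.length, ?_⟩
          have h1 : X₂ = (T ++ W₀).drop X₁.length := by rw [hT, List.drop_left]
          rw [h1, List.drop_append, Nat.sub_eq_zero_of_le hX1T, List.drop_zero]
        obtain ⟨X₂', rfl⟩ := hsuf2
        rw [show X₁ ++ (X₂' ++ W₀) = (X₁ ++ X₂') ++ W₀ by simp,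
            rho_snoc_W0 _ _ hW₀ne, rho_snoc_W0 _ _ hW₀ne]
        rcases eq_or_ne X₂' [] with rfl | hX₂'
        · left; simp [rho_nil]
        · have hlt : X₂'.length < n := by
            subst hlen
            have : 0 < W₀.length := List.length_pos_iff.mpr hW₀ne
            simp [List.length_append]; omega
          rcases IH _ hlt X₂' rfl hX₂' with h | ⟨Z₁, Z₂, Z₃, Z₄, hZ₂, hZ₃, hX₁e, hX₂e, hW, hρ⟩
          · left; rw [h, List.append_assoc]
          · right
            refine ⟨Z₁, Z₂, Z₃, Z₄ ++ W₀, hZ₂, hZ₃, hX₁e, by rw [hX₂e]; simp, hW, ?_⟩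
            rw [hρ, rho_snoc_W0 _ _ hW₀ne]
            simp [List.append_assoc]
      · -- W₀ straddles the boundary
        right
        have hTX1 : T.length < X₁.length := by
          have : X₂ ≠ [] := hne
          have : 0 < X₂.length := List.length_pos_iff.mpr hne
          omega
        have hTtake : T = X₁.take T.length := by
          have h1 : (X₁ ++ X₂).take T.length = X₁.take T.length :=
            List.take_append_of_le_length (le_of_lt hTX1)
          rw [← hT, List.take_left] at h1
          exact h1
        have hX₁e : X₁ = T ++ X₁.drop T.length := by
          conv_lhs => rw [← List.take_append_drop T.length X₁, ← hTtake]
        have hWe : X₁.drop T.length ++ X₂ = W₀ := by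
          have h1 : W₀ = (T ++ W₀).drop T.length := by rw [List.drop_left]
          rw [h1, hT, List.drop_append,
            Nat.sub_eq_zero_of_le (le_of_lt hTX1), List.drop_zero]
        have hZ₂ne : X₁.drop T.length ≠ [] := by
          intro h
          have := congrArg List.length h
          simp [List.length_drop] at this
          omega
        refine ⟨T, X₁.drop T.length, X₂, [], hZ₂ne, hne, hX₁e, by simp, hWe, ?_⟩
        rw [show X₁ ++ X₂ = T ++ W₀ from hT.symm, rho_snoc_W0 _ _ hW₀ne, rho_nil]
        simp
    · -- last letter of X₂ is an ordinary letter
      obtain ⟨X₂', a, rfl⟩ : ∃ X₂' a, X₂ = X₂' ++ [a] := by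
        rcases List.eq_nil_or_concat' X₂ with h | ⟨L, b, h⟩
        · exact absurd h hne
        · exact ⟨L, b, h⟩
      have hsub : ¬ (W₀ ≠ [] ∧ W₀ <:+ (X₁ ++ X₂') ++ [a]) := by
        rintro ⟨-, h⟩; exact hsuf (by simpa [List.append_assoc] using h)
      rw [show X₁ ++ (X₂' ++ [a]) = (X₁ ++ X₂') ++ [a] by simp, rho_snoc_a _ _ _ hsub]
      have hsub2 : ¬ (W₀ ≠ [] ∧ W₀ <:+ X₂' ++ [a]) := by
        rintro ⟨-, h⟩
        exact hsuf (h.trans (List.suffix_append X₁ _))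
      rcases eq_or_ne X₂' [] with rfl | hX₂'
      · left
        rw [rho_snoc_a W₀ [] a (by simpa using hsub2), rho_nil]
        simp
      · have hlt : X₂'.length < n := by subst hlen; simp
        rcases IH _ hlt X₂' rfl hX₂' with h | ⟨Z₁, Z₂, Z₃, Z₄, hZ₂, hZ₃, hX₁e, hX₂e, hW, hρ⟩
        · left; rw [h, rho_snoc_a _ _ _ hsub2, List.append_assoc]
        · right
          refine ⟨Z₁, Z₂, Z₃, Z₄ ++ [a], hZ₂, hZ₃, hX₁e, by rw [hX₂e]; simp, hW, ?_⟩
          have hsub3 : ¬ (W₀ ≠ [] ∧ W₀ <:+ Z₄ ++ [a]) := by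
            rintro ⟨-, h⟩
            apply hsuf
            refine h.trans ?_
            rw [hX₂e]
            exact ⟨X₁ ++ Z₃, by simp⟩
          rw [hρ, rho_snoc_a _ _ _ hsub3]
          simp [List.append_assoc]

/-- Rules of the form (C1): `ρ(X) → ρ(Y)` for each rule `X → Y` of `R`. -/
def C1 {α : Type*} (R : Set (List α × List α)) (W₀ : List α) :
    Set (List (α ⊕ Unit) × List (α ⊕ Unit)) :=
  {p | ∃ X Y : List α, (X, Y) ∈ R ∧ p = (rhoS W₀ X, rhoS W₀ Y)}

/-- The rule (C2): `W₀ → s`. -/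
def C2 {α : Type*} (W₀ : List α) : Set (List (α ⊕ Unit) × List (α ⊕ Unit)) :=
  {p | p = (W₀.map Sum.inl, [Sum.inr ()])}

/-- Rules of the form (C3): for each rule `X₁X₂ → Y₁` of `R` with `W₀ = Z₁X₁`
(`X₁, Y₁ ∈ A⁺`, `X₂, Z₁ ∈ A*`), the rule `ρ(Z₁X₁X₂) → ρ(Y₁')` where
`Z₁X₁X₂ →*_R Y₁' ∈ Irr(R)`. -/
def C3 {α : Type*} (R : Set (List α × List α)) (W₀ : List α) :
    Set (List (α ⊕ Unit) × List (α ⊕ Unit)) :=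
  {p | ∃ X₁ X₂ Y₁ Z₁ Y₁' : List α, X₁ ≠ [] ∧ Y₁ ≠ [] ∧ (X₁ ++ X₂, Y₁) ∈ R ∧
    W₀ = Z₁ ++ X₁ ∧ Steps R (Z₁ ++ X₁ ++ X₂) Y₁' ∧ Irr R Y₁' ∧
    p = (rhoS W₀ (Z₁ ++ X₁ ++ X₂), rhoS W₀ Y₁')}

/-- Rules of the form (C4): for each rule `X₂X₁ → Y₁` of `R` with `W₀ = X₁Z₁`
(`X₁, Y₁ ∈ A⁺`, `X₂, Z₁ ∈ A*`), the rule `ρ(X₂X₁Z₁) → ρ(Y₁')` where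
`X₂X₁Z₁ →*_R Y₁' ∈ Irr(R)`. -/
def C4 {α : Type*} (R : Set (List α × List α)) (W₀ : List α) :
    Set (List (α ⊕ Unit) × List (α ⊕ Unit)) :=
  {p | ∃ X₁ X₂ Y₁ Z₁ Y₁' : List α, X₁ ≠ [] ∧ Y₁ ≠ [] ∧ (X₂ ++ X₁, Y₁) ∈ R ∧
    W₀ = X₁ ++ Z₁ ∧ Steps R (X₂ ++ X₁ ++ Z₁) Y₁' ∧ Irr R Y₁' ∧
    p = (rhoS W₀ (X₂ ++ X₁ ++ Z₁), rhoS W₀ Y₁')}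

/-- Rules of the form (C5): for each rule `X₂X₃X₄ → Y₁` of `R` with `W₀ = X₄X₅ = X₁X₂`
(`X₂, X₄, Y₁ ∈ A⁺`, `X₁, X₃, X₅ ∈ A*`), the rule `ρ(X₁X₂X₃X₄X₅) → ρ(Y₁')` where
`X₁X₂X₃X₄X₅ →*_R Y₁' ∈ Irr(R)`. -/
def C5 {α : Type*} (R : Set (List α × List α)) (W₀ : List α) :
    Set (List (α ⊕ Unit) × List (α ⊕ Unit)) :=
  {p | ∃ X₁ X₂ X₃ X₄ X₅ Y₁ Y₁' : List α, X₂ ≠ [] ∧ X₄ ≠ [] ∧ Y₁ ≠ [] ∧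
    (X₂ ++ X₃ ++ X₄, Y₁) ∈ R ∧ W₀ = X₄ ++ X₅ ∧ W₀ = X₁ ++ X₂ ∧
    Steps R (X₁ ++ X₂ ++ X₃ ++ X₄ ++ X₅) Y₁' ∧ Irr R Y₁' ∧
    p = (rhoS W₀ (X₁ ++ X₂ ++ X₃ ++ X₄ ++ X₅), rhoS W₀ Y₁')}

/-- Rules of the form (C6): `sX₃ → X₁s` whenever `W₀ = X₁X₂ = X₂X₃` with
`X₁, X₂, X₃ ∈ A⁺`. -/
def C6 {α : Type*} (W₀ : List α) : Set (List (α ⊕ Unit) × List (α ⊕ Unit)) :=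
  {p | ∃ X₁ X₂ X₃ : List α, X₁ ≠ [] ∧ X₂ ≠ [] ∧ X₃ ≠ [] ∧
    W₀ = X₁ ++ X₂ ∧ W₀ = X₂ ++ X₃ ∧
    p = (Sum.inr () :: X₃.map Sum.inl, X₁.map Sum.inl ++ [Sum.inr ()])}

/-- The rewriting system `R_S` over `B = A ∪ {s}`. -/
def RS {α : Type*} (R : Set (List α × List α)) (W₀ : List α) :
    Set (List (α ⊕ Unit) × List (α ⊕ Unit)) :=
  C1 R W₀ ∪ C2 W₀ ∪ C3 R W₀ ∪ C4 R W₀ ∪ C5 R W₀ ∪ C6 W₀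

/-- **Lemma 3.2.** For `X₁, X₂ ∈ A⁺`, either `ρ(X₁X₂) = ρ(X₁)ρ(X₂)`, or
`ρ(X₁X₂) = ρ(Z₁)sρ(Z₄)` where `X₁ = Z₁Z₂`, `X₂ = Z₃Z₄` and `Z₂Z₃ = W₀`
(`Z₁, Z₄ ∈ A*`, `Z₂, Z₃ ∈ A⁺`). -/
theorem lemma_3_2 {α : Type*} (R : Set (List α × List α))
    (hαfin : Finite α) (hRfin : R.Finite) (hRWS : IsRWS R) (hcomp : CompleteRWS R)
    (W₀ : List α) (hW₀len : 1 < W₀.length) (hW₀irr : Irr R W₀)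
    (X₁ X₂ : List α) (h₁ : X₁ ≠ []) (h₂ : X₂ ≠ []) :
    rhoS W₀ (X₁ ++ X₂) = rhoS W₀ X₁ ++ rhoS W₀ X₂ ∨
    ∃ Z₁ Z₂ Z₃ Z₄ : List α, Z₂ ≠ [] ∧ Z₃ ≠ [] ∧
      X₁ = Z₁ ++ Z₂ ∧ X₂ = Z₃ ++ Z₄ ∧ Z₂ ++ Z₃ = W₀ ∧
      rhoS W₀ (X₁ ++ X₂) = rhoS W₀ Z₁ ++ [Sum.inr ()] ++ rhoS W₀ Z₄ := by
  have hW₀ne : W₀ ≠ [] := by intro h; simp [h] at hW₀len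
  exact lemma32_aux W₀ hW₀ne X₁ X₂.length X₂ rfl h₂
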